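/- arXiv:0710.1699 — 2 statements merged into one kernel-verified Lean document; each statement's English description precedes it below -/
import Mathlib

section
/- Let (Ω, ≤) be a linear order and f, g ∈ Aut(Ω, ≤) with g ≥ 1 (pointwise). If g⁻¹fg is orthogonal to f (i.e., |g⁻¹fg| ∧ |f| = 1 in the lattice-ordered group Aut(Ω, ≤)), then f^m ≤ g for every integer m. -/
/-- Let `f, g` be order-automorphisms of a linear order `Ω` with `g ≥ 1`
pointwise.  If the conjugate of `f` by `g` is orthogonal to `f` (the
pointwise meet of their absolute values is the identity), then `f ^ m ≤ g`
pointwise for every integer `m`, i.e. `f ≪ g`. -/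
theorem stmt_10 (Ω : Type*) [LinearOrder Ω] (f g : Ω ≃o Ω)
    (hg : ∀ x, x ≤ g x)
    (horth : ∀ x : Ω,
      min (max (g (f (g.symm x))) (g (f.symm (g.symm x))))
          (max (f x) (f.symm x)) = x) :
    ∀ m : ℤ, ∀ x, (f ^ m) x ≤ g x := by
  -- `h` is the pointwise absolute value of `f`.
  set h : Ω → Ω := fun x => max (f x) (f.symm x) with hh
  have hmono : Monotone h := fun a b hab =>
    max_le_max (f.monotone hab) (f.symm.monotone hab)
  have hge : ∀ x, x ≤ h x := by
    intro x
    rcases le_total x (f x) with h1 | h1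
    · exact le_max_of_le_left h1
    · refine le_max_of_le_right ?_
      have := f.symm.monotone h1
      simpa using this
  -- a fixed point of `h` is a fixed point of `h` forever
  have hfixf : ∀ x, h x = x → ∀ n : ℕ, h^[n] x = x := by
    intro x hx n
    exact Function.iterate_fixed hx n
  -- key consequence of orthogonality: if `x` moves under `h`, then `g.symm x` is fixed
  have key : ∀ x, x < h x → h (g.symm x) = g.symm x := by
    intro x hx
    have hmin : min (g (h (g.symm x))) (h x) = x := by
      have e := horth x
      rw [← Monotone.map_max g.monotone] at e
      exact e
    have hge1 : x ≤ g (h (g.symm x)) := by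
      have := g.monotone (hge (g.symm x))
      simpa using this
    have heq : g (h (g.symm x)) = x := by
      by_contra hne
      have hlt : x < g (h (g.symm x)) := hge1.lt_of_ne (Ne.symm hne)
      have h2 : x < min (g (h (g.symm x))) (h x) := lt_min hlt hx
      rw [hmin] at h2
      exact lt_irrefl x h2
    have h3 : g (h (g.symm x)) = g (g.symm x) := by
      rw [heq, g.apply_symm_apply]
    exact g.injective h3
  -- main estimate: every `h`-iterate of `x` stays below `g x`
  have main : ∀ n : ℕ, ∀ x, h^[n] x ≤ g x := by
    intro n
    induction n with
    | zero => intro x; simpa using hg x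
    | succ n ih =>
      intro x
      by_contra hcon
      push_neg at hcon
      have hmov : g x < h (g x) := by
        by_contra hle
        push_neg at hle
        have h2 : h^[n + 1] x ≤ h (g x) := by
          rw [Function.iterate_succ_apply' h n x]
          exact hmono (ih x)
        exact absurd (h2.trans hle) (not_le.mpr hcon)
      have hfix : h x = x := by
        have := key (g x) hmov
        simpa using this
      have h4 : h^[n + 1] x = x := hfixf x hfix (n + 1)
      rw [h4] at hcon
      exact absurd (hg x) (not_le.mpr hcon)
  -- powers of `f` are dominated by iterates of `h`
  have powle : ∀ n : ℕ, ∀ x, (f ^ n) x ≤ h^[n] x ∧ ((f ^ n)⁻¹ : Ω ≃o Ω) x ≤ h^[n] x := by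
    intro n
    induction n with
    | zero => intro x; exact ⟨le_of_eq rfl, le_of_eq rfl⟩
    | succ n ih =>
      intro x
      constructor
      · have e : (f ^ (n + 1)) x = (f ^ n) (f x) := by
          rw [pow_succ]; rfl
        rw [e, Function.iterate_succ_apply]
        calc (f ^ n) (f x) ≤ h^[n] (f x) := (ih (f x)).1
          _ ≤ h^[n] (h x) := (hmono.iterate n) (le_max_left (f x) (f.symm x))
      · have e : ((f ^ (n + 1))⁻¹ : Ω ≃o Ω) x = ((f ^ n)⁻¹ : Ω ≃o Ω) (f⁻¹ x) := by
          rw [pow_succ', mul_inv_rev]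
          rfl
        rw [e, Function.iterate_succ_apply]
        have hle : (f⁻¹ : Ω ≃o Ω) x ≤ h x := le_max_right (f x) (f.symm x)
        calc ((f ^ n)⁻¹ : Ω ≃o Ω) (f⁻¹ x) ≤ h^[n] ((f⁻¹ : Ω ≃o Ω) x) := (ih _).2
          _ ≤ h^[n] (h x) := (hmono.iterate n) hle
  intro m x
  rcases le_or_gt 0 m with hm | hm
  · obtain ⟨n, rfl⟩ := Int.eq_ofNat_of_zero_le hm
    have e : (f ^ (n : ℤ)) x = (f ^ n) x := by rw [zpow_natCast]
    rw [e]
    exact (powle n x).1.trans (main n x)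
  · obtain ⟨n, rfl⟩ : ∃ n : ℕ, m = -(n : ℤ) := ⟨m.natAbs, by omega⟩
    have e : (f ^ (-(n : ℤ))) x = ((f ^ n)⁻¹ : Ω ≃o Ω) x := by
      rw [zpow_neg, zpow_natCast]
    rw [e]
    exact (powle n x).2.trans (main n x)
end

section
/- Let f, g ∈ Aut(ℝ, ≤) be strictly positive elements, each having exactly one bump whose supporting interval is bounded above and below in ℝ. Then f and g are conjugate in Aut(ℝ, ≤). More precisely, given α ∈ supp(f), β ∈ supp(g), and any order-preserving bijection h₀: [α, αf] → [β, βg], there exists h ∈ Aut(ℝ, ≤) extending h₀ with h⁻¹fh = g. -/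
lemma s11_zc (F : ℝ ≃o ℝ) (m n : ℤ) (x : ℝ) :
    (F ^ m) ((F ^ n) x) = (F ^ (m + n)) x := by
  rw [zpow_add]; rfl

lemma s11_cancel (F : ℝ ≃o ℝ) (n : ℤ) (x : ℝ) : (F ^ (-n)) ((F ^ n) x) = x := by
  rw [s11_zc]; simp

lemma s11_cancel' (F : ℝ ≃o ℝ) (n : ℤ) (x : ℝ) : (F ^ n) ((F ^ (-n)) x) = x := by
  rw [s11_zc]; simp

lemma s11_inv_left (F : ℝ ≃o ℝ) (x : ℝ) : F⁻¹ (F x) = x := by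
  have := s11_cancel F 1 x; simpa using this

lemma s11_inv_right (F : ℝ ≃o ℝ) (x : ℝ) : F (F⁻¹ x) = x := by
  have := s11_cancel' F 1 x; simpa using this

lemma s11_succ_apply (F : ℝ ≃o ℝ) (n : ℤ) (x : ℝ) : (F ^ (n + 1)) x = F ((F ^ n) x) := by
  rw [add_comm, ← s11_zc, zpow_one]

section

variable {F : ℝ ≃o ℝ} {a b : ℝ}

lemma s11_fix (hS : {x : ℝ | F x ≠ x} = Set.Ioo a b) (x : ℝ) (hx : x ∉ Set.Ioo a b) :
    F x = x := by
  by_contra h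
  exact hx (hS ▸ (h : x ∈ {x : ℝ | F x ≠ x}))

lemma s11_lt (h1 : ∀ x, x ≤ F x) (hS : {x : ℝ | F x ≠ x} = Set.Ioo a b)
    (x : ℝ) (hx : x ∈ Set.Ioo a b) : x < F x := by
  have hx' : F x ≠ x := by rw [← hS] at hx; exact hx
  exact (h1 x).lt_of_ne (Ne.symm hx')

lemma s11_fa (hS : {x : ℝ | F x ≠ x} = Set.Ioo a b) : F a = a :=
  s11_fix hS a (by simp)

lemma s11_fb (hS : {x : ℝ | F x ≠ x} = Set.Ioo a b) : F b = b :=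
  s11_fix hS b (by simp)

lemma s11_maps (h1 : ∀ x, x ≤ F x) (hS : {x : ℝ | F x ≠ x} = Set.Ioo a b)
    (x : ℝ) (hx : x ∈ Set.Ioo a b) : F x ∈ Set.Ioo a b := by
  refine ⟨hx.1.trans_le (h1 x), ?_⟩
  have := F.strictMono hx.2
  rwa [s11_fb hS] at this

lemma s11_inv_maps (h1 : ∀ x, x ≤ F x) (hS : {x : ℝ | F x ≠ x} = Set.Ioo a b)
    (x : ℝ) (hx : x ∈ Set.Ioo a b) : F⁻¹ x ∈ Set.Ioo a b := by
  have ha' : F⁻¹ a = a := by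
    calc F⁻¹ a = F⁻¹ (F a) := by rw [s11_fa hS]
    _ = a := s11_inv_left F a
  constructor
  · have h := (F⁻¹).strictMono hx.1
    rwa [ha'] at h
  · have h2 : F⁻¹ x ≤ x := by have := h1 (F⁻¹ x); rwa [s11_inv_right] at this
    exact h2.trans_lt hx.2

lemma s11_zpow_maps (h1 : ∀ x, x ≤ F x) (hS : {x : ℝ | F x ≠ x} = Set.Ioo a b)
    (n : ℤ) (x : ℝ) (hx : x ∈ Set.Ioo a b) : (F ^ n) x ∈ Set.Ioo a b := by
  induction n using Int.induction_on with
  | zero => simpa using hx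
  | succ k ih =>
      rw [s11_succ_apply]; exact s11_maps h1 hS _ ih
  | pred k ih =>
      have h3 : (F ^ (-(k : ℤ) - 1)) x = F⁻¹ ((F ^ (-(k : ℤ))) x) := by
        rw [show (-(k:ℤ) - 1) = (-1) + (-(k:ℤ)) by ring, ← s11_zc, zpow_neg_one]
      rw [h3]; exact s11_inv_maps h1 hS _ ih

lemma s11_ptMono (h1 : ∀ x, x ≤ F x) (hS : {x : ℝ | F x ≠ x} = Set.Ioo a b)
    (x : ℝ) (hx : x ∈ Set.Ioo a b) : StrictMono (fun n : ℤ => (F ^ n) x) :=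
  strictMono_int_of_lt_succ fun n => by
    have hmem := s11_zpow_maps h1 hS n x hx
    have h := s11_lt h1 hS _ hmem
    show (F ^ n) x < (F ^ (n + 1)) x
    rw [s11_succ_apply]; exact h

lemma s11_escape_up (h1 : ∀ x, x ≤ F x) (hS : {x : ℝ | F x ≠ x} = Set.Ioo a b)
    (x : ℝ) (hx : x ∈ Set.Ioo a b) (y : ℝ) (hy : y < b) :
    ∃ n : ℕ, y < (F ^ (n : ℤ)) x := by
  set s : Set ℝ := Set.range (fun n : ℕ => (F ^ (n : ℤ)) x) with hsdef
  have hne : s.Nonempty := ⟨_, ⟨0, rfl⟩⟩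
  have hbd : BddAbove s := ⟨b, by rintro _ ⟨n, rfl⟩; exact (s11_zpow_maps h1 hS _ x hx).2.le⟩
  set L := sSup s with hLdef
  have hLmem : ∀ n : ℕ, (F ^ (n : ℤ)) x ≤ L := fun n => le_csSup hbd ⟨n, rfl⟩
  have hFL : F L = L := by
    have h2 : L ≤ F⁻¹ L := by
      refine csSup_le hne ?_
      rintro _ ⟨n, rfl⟩
      have h3 : F ((F ^ (n : ℤ)) x) ≤ L := by
        rw [← s11_succ_apply]
        have := hLmem (n + 1)
        push_cast at this ⊢
        exact this
      have h4 := (F⁻¹).monotone h3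
      rwa [s11_inv_left] at h4
    have h4 : F L ≤ L := by have := F.monotone h2; rwa [s11_inv_right] at this
    exact le_antisymm h4 (h1 L)
  have hLa : a < L := hx.1.trans_le (by simpa using hLmem 0)
  have hLb : L ≤ b := csSup_le hne (by rintro _ ⟨n, rfl⟩; exact (s11_zpow_maps h1 hS _ x hx).2.le)
  have hLeq : L = b := by
    rcases hLb.lt_or_eq with h | h
    · exact absurd hFL (s11_lt h1 hS L ⟨hLa, h⟩).ne'
    · exact h
  obtain ⟨z, ⟨n, rfl⟩, hz⟩ := exists_lt_of_lt_csSup hne (by rw [← hLdef, hLeq]; exact hy)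
  exact ⟨n, hz⟩

lemma s11_escape_down (h1 : ∀ x, x ≤ F x) (hS : {x : ℝ | F x ≠ x} = Set.Ioo a b)
    (x : ℝ) (hx : x ∈ Set.Ioo a b) (y : ℝ) (hy : a < y) :
    ∃ n : ℕ, (F ^ (-(n : ℤ))) x < y := by
  set s : Set ℝ := Set.range (fun n : ℕ => (F ^ (-(n : ℤ))) x) with hsdef
  have hne : s.Nonempty := ⟨_, ⟨0, rfl⟩⟩
  have hbd : BddBelow s := ⟨a, by rintro _ ⟨n, rfl⟩; exact (s11_zpow_maps h1 hS _ x hx).1.le⟩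
  set L := sInf s with hLdef
  have hLmem : ∀ n : ℕ, L ≤ (F ^ (-(n : ℤ))) x := fun n => csInf_le hbd ⟨n, rfl⟩
  have hFL : F L = L := by
    have h2 : F L ≤ L := by
      refine le_csInf hne ?_
      rintro _ ⟨n, rfl⟩
      have h3 : L ≤ (F ^ (-((n : ℤ) + 1))) x := by
        have := hLmem (n + 1)
        push_cast at this ⊢
        exact this
      have h4 := F.monotone h3
      have h5 : F ((F ^ (-((n : ℤ) + 1))) x) = (F ^ (-(n : ℤ))) x := by
        rw [show (-(n:ℤ)) = 1 + (-((n:ℤ)+1)) by ring, ← s11_zc, zpow_one]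
      rwa [h5] at h4
    exact le_antisymm h2 (h1 L)
  have hLb : L < b := (by simpa using hLmem 0 : L ≤ x).trans_lt hx.2
  have hLa : a ≤ L := le_csInf hne (by rintro _ ⟨n, rfl⟩; exact (s11_zpow_maps h1 hS _ x hx).1.le)
  have hLeq : L = a := by
    rcases hLa.lt_or_eq with h | h
    · exact absurd hFL (s11_lt h1 hS L ⟨h, hLb⟩).ne'
    · exact h.symm
  obtain ⟨z, ⟨n, rfl⟩, hz⟩ := exists_lt_of_csInf_lt hne (by rw [← hLdef, hLeq]; exact hy)
  exact ⟨n, hz⟩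

lemma s11_block (h1 : ∀ x, x ≤ F x) (hS : {x : ℝ | F x ≠ x} = Set.Ioo a b)
    (α : ℝ) (hαm : α ∈ Set.Ioo a b) (x : ℝ) (hx : x ∈ Set.Ioo a b) :
    ∃ n : ℤ, (F ^ n) α ≤ x ∧ x < (F ^ (n + 1)) α := by
  obtain ⟨m, hm⟩ := s11_escape_up h1 hS α hαm x hx.2
  obtain ⟨k, hk⟩ := s11_escape_down h1 hS α hαm x hx.1
  have hmono := s11_ptMono h1 hS α hαm
  have hbdd : ∃ bnd : ℤ, ∀ z : ℤ, (F ^ z) α ≤ x → z ≤ bnd := by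
    refine ⟨m, fun z hz => ?_⟩
    by_contra h
    push_neg at h
    exact absurd (hz.trans_lt hm) (not_lt.2 (hmono.monotone h.le))
  obtain ⟨n, hn1, hn2⟩ := Int.exists_greatest_of_bdd hbdd ⟨-k, hk.le⟩
  refine ⟨n, hn1, ?_⟩
  by_contra h
  push_neg at h
  have := hn2 (n + 1) h
  omega

lemma s11_block_unique (h1 : ∀ x, x ≤ F x) (hS : {x : ℝ | F x ≠ x} = Set.Ioo a b)
    (α : ℝ) (hαm : α ∈ Set.Ioo a b) {x : ℝ} {m n : ℤ}
    (hm1 : (F ^ m) α ≤ x) (hm2 : x < (F ^ (m + 1)) α)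
    (hn1 : (F ^ n) α ≤ x) (hn2 : x < (F ^ (n + 1)) α) : m = n := by
  have hmono := s11_ptMono h1 hS α hαm
  by_contra h
  rcases lt_or_gt_of_ne h with hlt | hlt
  · exact absurd (hm2.trans_le (hn1.trans' (hmono.monotone (by omega)))) (lt_irrefl x)
  · exact absurd (hn2.trans_le (hm1.trans' (hmono.monotone (by omega)))) (lt_irrefl x)

end

lemma s11_supp (F : ℝ ≃o ℝ) (h1 : ∀ x, x ≤ F x) (hne : {x : ℝ | F x ≠ x}.Nonempty)
    (hoc : {x : ℝ | F x ≠ x}.OrdConnected) (hba : BddAbove {x : ℝ | F x ≠ x})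
    (hbb : BddBelow {x : ℝ | F x ≠ x}) :
    {x : ℝ | F x ≠ x} = Set.Ioo (sInf {x : ℝ | F x ≠ x}) (sSup {x : ℝ | F x ≠ x}) ∧
      sInf {x : ℝ | F x ≠ x} < sSup {x : ℝ | F x ≠ x} := by
  set S := {x : ℝ | F x ≠ x} with hSdef
  set a := sInf S with hadef
  set b := sSup S with hbdef
  have ha : F a = a := by
    by_contra h
    have h2 : F.symm a ≤ a := by have := h1 (F.symm a); rwa [F.apply_symm_apply] at this
    have h3 : F.symm a ≠ a := by
      intro he
      apply h
      rw [← he, F.apply_symm_apply]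
      exact he.symm
    have h5 : F.symm a ∉ S := fun hmem => absurd (csInf_le hbb hmem) (not_le.2 (h2.lt_of_ne h3))
    have h6 : F (F.symm a) = F.symm a := not_not.1 h5
    rw [F.apply_symm_apply] at h6
    exact h3 h6.symm
  have hb : F b = b := by
    by_contra h
    have hlt : b < F b := (h1 b).lt_of_ne (Ne.symm h)
    obtain ⟨z, hz1, hz2⟩ := exists_between hlt
    have hzS : z ∉ S := fun hmem => absurd (le_csSup hba hmem) (not_le.2 hz1)
    have hz3 : F z = z := not_not.1 hzS
    have h4 : F b < F z := F.strictMono hz1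
    rw [hz3] at h4
    exact absurd hz2 (not_lt.2 h4.le)
  have hsub : S ⊆ Set.Ioo a b := by
    intro x hx
    constructor
    · exact lt_of_le_of_ne (csInf_le hbb hx) (fun he => hx (by rw [← he]; exact ha))
    · exact lt_of_le_of_ne (le_csSup hba hx) (fun he => hx (by rw [he]; exact hb))
  have hab : a < b := by
    obtain ⟨w, hwS⟩ := hne
    exact (hsub hwS).1.trans (hsub hwS).2
  have hsup : Set.Ioo a b ⊆ S := by
    intro x hx
    obtain ⟨s, hsS, hs⟩ := exists_lt_of_csInf_lt hne hx.1
    obtain ⟨t, htS, ht⟩ := exists_lt_of_lt_csSup hne hx.2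
    exact hoc.out hsS htS ⟨hs.le, ht.le⟩
  exact ⟨Set.Subset.antisymm hsub hsup, hab⟩

open Classical in
noncomputable def s11N (f : ℝ ≃o ℝ) (α : ℝ) (x : ℝ) : ℤ :=
  if h : ∃ n : ℤ, (f ^ n) α ≤ x ∧ x < (f ^ (n + 1)) α then h.choose else 0

lemma s11N_spec (f : ℝ ≃o ℝ) (α x : ℝ)
    (h : ∃ n : ℤ, (f ^ n) α ≤ x ∧ x < (f ^ (n + 1)) α) :
    (f ^ (s11N f α x)) α ≤ x ∧ x < (f ^ (s11N f α x + 1)) α := by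
  unfold s11N
  rw [dif_pos h]
  exact h.choose_spec

noncomputable def s11h0 {f g : ℝ ≃o ℝ} {α β : ℝ}
    (h₀ : Set.Icc α (f α) ≃o Set.Icc β (g β)) (t : ℝ) : ℝ :=
  if ht : t ∈ Set.Icc α (f α) then ((h₀ ⟨t, ht⟩ : Set.Icc β (g β)) : ℝ) else t

section h0

variable {f g : ℝ ≃o ℝ} {α β : ℝ} (h₀ : Set.Icc α (f α) ≃o Set.Icc β (g β))

lemma s11h0_apply (t : ℝ) (ht : t ∈ Set.Icc α (f α)) :
    s11h0 h₀ t = ((h₀ ⟨t, ht⟩ : Set.Icc β (g β)) : ℝ) := dif_pos ht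

lemma s11h0_mem (t : ℝ) (ht : t ∈ Set.Icc α (f α)) :
    s11h0 h₀ t ∈ Set.Icc β (g β) := by
  rw [s11h0_apply h₀ t ht]; exact (h₀ ⟨t, ht⟩).2

lemma s11h0_mono {s t : ℝ} (hs : s ∈ Set.Icc α (f α)) (ht : t ∈ Set.Icc α (f α))
    (hst : s < t) : s11h0 h₀ s < s11h0 h₀ t := by
  rw [s11h0_apply h₀ s hs, s11h0_apply h₀ t ht]
  exact Subtype.coe_lt_coe.2 (h₀.strictMono (Subtype.mk_lt_mk.2 hst))

lemma s11h0_bot (h1f : α ≤ f α) (h1g : β ≤ g β) : s11h0 h₀ α = β := by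
  rw [s11h0_apply h₀ α ⟨le_rfl, h1f⟩]
  have hge : β ≤ ((h₀ ⟨α, ⟨le_rfl, h1f⟩⟩ : Set.Icc β (g β)) : ℝ) := (h₀ _).2.1
  obtain ⟨t, ht⟩ := h₀.surjective ⟨β, le_rfl, h1g⟩
  have hle2 : ((h₀ ⟨α, ⟨le_rfl, h1f⟩⟩ : Set.Icc β (g β)) : ℝ) ≤ ((h₀ t : Set.Icc β (g β)) : ℝ) :=
    Subtype.coe_le_coe.2 (h₀.monotone (Subtype.coe_le_coe.1 t.2.1))
  rw [ht] at hle2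
  exact le_antisymm hle2 hge

lemma s11h0_top (h1f : α ≤ f α) (h1g : β ≤ g β) : s11h0 h₀ (f α) = g β := by
  rw [s11h0_apply h₀ (f α) ⟨h1f, le_rfl⟩]
  have hle : ((h₀ ⟨f α, ⟨h1f, le_rfl⟩⟩ : Set.Icc β (g β)) : ℝ) ≤ g β := (h₀ _).2.2
  obtain ⟨t, ht⟩ := h₀.surjective ⟨g β, h1g, le_rfl⟩
  have hge2 : ((h₀ t : Set.Icc β (g β)) : ℝ) ≤ ((h₀ ⟨f α, ⟨h1f, le_rfl⟩⟩ : Set.Icc β (g β)) : ℝ) :=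
    Subtype.coe_le_coe.2 (h₀.monotone (Subtype.coe_le_coe.1 t.2.2))
  rw [ht] at hge2
  exact le_antisymm hle hge2

lemma s11h0_left_inv (t : ℝ) (ht : t ∈ Set.Icc α (f α)) :
    s11h0 h₀.symm (s11h0 h₀ t) = t := by
  have h1 : s11h0 h₀ t = ((h₀ ⟨t, ht⟩ : Set.Icc β (g β)) : ℝ) := s11h0_apply h₀ t ht
  have h2 : s11h0 h₀ t ∈ Set.Icc β (g β) := by rw [h1]; exact (h₀ ⟨t, ht⟩).2
  rw [s11h0_apply h₀.symm _ h2]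
  have h3 : (⟨s11h0 h₀ t, h2⟩ : Set.Icc β (g β)) = h₀ ⟨t, ht⟩ := Subtype.ext h1
  rw [h3, h₀.symm_apply_apply]

lemma s11h0_right_inv (y : ℝ) (hy : y ∈ Set.Icc β (g β)) :
    s11h0 h₀ (s11h0 h₀.symm y) = y := by
  have := s11h0_left_inv h₀.symm y hy
  rwa [OrderIso.symm_symm] at this

end h0

noncomputable def s11H (f g : ℝ ≃o ℝ) (α a b c d : ℝ) (h0 : ℝ → ℝ) (x : ℝ) : ℝ :=
  if x ≤ a then x - a + c
  else if b ≤ x then x - b + d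
  else (g ^ s11N f α x) (h0 ((f ^ (-(s11N f α x))) x))

lemma s11H_low (f g : ℝ ≃o ℝ) (α a b c d : ℝ) (h0 : ℝ → ℝ) (x : ℝ) (hx : x ≤ a) :
    s11H f g α a b c d h0 x = x - a + c := by
  unfold s11H; rw [if_pos hx]

lemma s11H_high (f g : ℝ ≃o ℝ) (α a b c d : ℝ) (h0 : ℝ → ℝ) (x : ℝ) (hab : a < b)
    (hx : b ≤ x) : s11H f g α a b c d h0 x = x - b + d := by
  unfold s11H; rw [if_neg (by linarith), if_pos hx]

lemma s11H_mid (f g : ℝ ≃o ℝ) (α a b c d : ℝ) (h0 : ℝ → ℝ) (x : ℝ)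
    (hx : x ∈ Set.Ioo a b) :
    s11H f g α a b c d h0 x = (g ^ s11N f α x) (h0 ((f ^ (-(s11N f α x))) x)) := by
  unfold s11H; rw [if_neg (not_le.2 hx.1), if_neg (not_le.2 hx.2)]

/-- Let `f, g` be strictly positive order-automorphisms of `ℝ`, each with
exactly one bump whose supporting interval is bounded above and below (i.e.
the support is nonempty, order-connected, and bounded).  Given
`α ∈ supp f`, `β ∈ supp g` and any order-preserving bijection
`h₀ : [α, α f] → [β, β g]`, there is `h ∈ Aut(ℝ, ≤)` extending `h₀` with
`h⁻¹ f h = g` (equivalently `f h = h g`, i.e. `h (f x) = g (h x)` for all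
`x`); in particular `f` and `g` are conjugate. -/
theorem stmt_11 (f g : ℝ ≃o ℝ)
    (hf1 : ∀ x, x ≤ f x) (hg1 : ∀ x, x ≤ g x)
    (hfsupp : {x : ℝ | f x ≠ x}.Nonempty ∧ {x : ℝ | f x ≠ x}.OrdConnected ∧
      BddAbove {x : ℝ | f x ≠ x} ∧ BddBelow {x : ℝ | f x ≠ x})
    (hgsupp : {x : ℝ | g x ≠ x}.Nonempty ∧ {x : ℝ | g x ≠ x}.OrdConnected ∧
      BddAbove {x : ℝ | g x ≠ x} ∧ BddBelow {x : ℝ | g x ≠ x})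
    (α β : ℝ) (hα : f α ≠ α) (hβ : g β ≠ β)
    (h₀ : Set.Icc α (f α) ≃o Set.Icc β (g β)) :
    ∃ h : ℝ ≃o ℝ,
      (∀ x (hx : x ∈ Set.Icc α (f α)), h x = (h₀ ⟨x, hx⟩ : ℝ)) ∧
      (∀ x, h (f x) = g (h x)) := by
  obtain ⟨hf2, hf3, hf4, hf5⟩ := hfsupp
  obtain ⟨hg2, hg3, hg4, hg5⟩ := hgsupp
  obtain ⟨hSf, habf⟩ := s11_supp f hf1 hf2 hf3 hf4 hf5
  obtain ⟨hSg, habg⟩ := s11_supp g hg1 hg2 hg3 hg4 hg5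
  set a := sInf {x : ℝ | f x ≠ x} with hadef
  set b := sSup {x : ℝ | f x ≠ x} with hbdef
  set c := sInf {x : ℝ | g x ≠ x} with hcdef
  set d := sSup {x : ℝ | g x ≠ x} with hddef
  have hαm : α ∈ Set.Ioo a b := by rw [← hSf]; exact hα
  have hβm : β ∈ Set.Ioo c d := by rw [← hSg]; exact hβ
  have hαfα : α < f α := s11_lt hf1 hSf α hαm
  have hβgβ : β < g β := s11_lt hg1 hSg β hβm
  have hfαm : f α ∈ Set.Ioo a b := s11_maps hf1 hSf α hαm
  have hgβm : g β ∈ Set.Ioo c d := s11_maps hg1 hSg β hβm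
  set H : ℝ → ℝ := s11H f g α a b c d (s11h0 h₀) with hHdef
  have hex : ∀ x ∈ Set.Ioo a b, ∃ n : ℤ, (f ^ n) α ≤ x ∧ x < (f ^ (n + 1)) α :=
    fun x hx => s11_block hf1 hSf α hαm x hx
  have hNs : ∀ x ∈ Set.Ioo a b,
      (f ^ s11N f α x) α ≤ x ∧ x < (f ^ (s11N f α x + 1)) α :=
    fun x hx => s11N_spec f α x (hex x hx)
  have hNeq : ∀ x ∈ Set.Ioo a b, ∀ n : ℤ,
      (f ^ n) α ≤ x → x < (f ^ (n + 1)) α → s11N f α x = n :=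
    fun x hx n h1' h2' =>
      s11_block_unique hf1 hSf α hαm (hNs x hx).1 (hNs x hx).2 h1' h2'
  have htmem : ∀ x ∈ Set.Ioo a b, (f ^ (-(s11N f α x))) x ∈ Set.Ico α (f α) := by
    intro x hx
    obtain ⟨h1', h2'⟩ := hNs x hx
    constructor
    · have := (f ^ (-(s11N f α x))).monotone h1'
      rwa [s11_cancel] at this
    · have h5 : (f ^ (-(s11N f α x))) ((f ^ (s11N f α x + 1)) α) = f α := by
        rw [s11_zc, show -(s11N f α x) + (s11N f α x + 1) = 1 by ring, zpow_one]
      have := (f ^ (-(s11N f α x))).strictMono h2'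
      rwa [h5] at this
  have hHlow : ∀ x, x ≤ a → H x = x - a + c := fun x hx => by
    rw [hHdef]; exact s11H_low f g α a b c d _ x hx
  have hHhigh : ∀ x, b ≤ x → H x = x - b + d := fun x hx => by
    rw [hHdef]; exact s11H_high f g α a b c d _ x habf hx
  have hHmid : ∀ x ∈ Set.Ioo a b,
      H x = (g ^ s11N f α x) (s11h0 h₀ ((f ^ (-(s11N f α x))) x)) := fun x hx => by
    rw [hHdef]; exact s11H_mid f g α a b c d _ x hx
  have hHbound : ∀ x ∈ Set.Ioo a b,
      (g ^ s11N f α x) β ≤ H x ∧ H x < (g ^ (s11N f α x + 1)) β := by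
    intro x hx
    have ht := htmem x hx
    have htm : (f ^ (-(s11N f α x))) x ∈ Set.Icc α (f α) := ⟨ht.1, ht.2.le⟩
    have hb1 : β ≤ s11h0 h₀ ((f ^ (-(s11N f α x))) x) := (s11h0_mem h₀ _ htm).1
    have hb2 : s11h0 h₀ ((f ^ (-(s11N f α x))) x) < g β := by
      have := s11h0_mono h₀ htm ⟨hαfα.le, le_rfl⟩ ht.2
      rwa [s11h0_top h₀ hαfα.le hβgβ.le] at this
    rw [hHmid x hx]
    constructor
    · exact (g ^ s11N f α x).monotone hb1
    · have h6 : (g ^ s11N f α x) (g β) = (g ^ (s11N f α x + 1)) β := by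
        have := s11_zc g (s11N f α x) 1 β
        rwa [zpow_one] at this
      have := (g ^ s11N f α x).strictMono hb2
      rwa [h6] at this
  have hHmemIoo : ∀ x ∈ Set.Ioo a b, H x ∈ Set.Ioo c d := by
    intro x hx
    obtain ⟨hb1, hb2⟩ := hHbound x hx
    exact ⟨(s11_zpow_maps hg1 hSg _ β hβm).1.trans_le hb1,
      hb2.trans_le (s11_zpow_maps hg1 hSg _ β hβm).2.le⟩
  have hmono : StrictMono H := by
    intro x y hxy
    by_cases hxa : x ≤ a
    · rw [hHlow x hxa]
      by_cases hya : y ≤ a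
      · rw [hHlow y hya]; linarith
      · by_cases hyb : b ≤ y
        · rw [hHhigh y hyb]; linarith
        · have hym : y ∈ Set.Ioo a b := ⟨not_le.1 hya, not_le.1 hyb⟩
          have := (hHmemIoo y hym).1
          linarith
    · by_cases hxb : b ≤ x
      · have hyb : b ≤ y := hxb.trans hxy.le
        rw [hHhigh x hxb, hHhigh y hyb]; linarith
      · have hxm : x ∈ Set.Ioo a b := ⟨not_le.1 hxa, not_le.1 hxb⟩
        by_cases hyb : b ≤ y
        · rw [hHhigh y hyb]
          have := (hHmemIoo x hxm).2
          linarith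
        · have hym : y ∈ Set.Ioo a b := ⟨hxm.1.trans hxy, not_le.1 hyb⟩
          have hnle : s11N f α x ≤ s11N f α y := by
            by_contra hcon
            push_neg at hcon
            have h1' := (hNs y hym).2
            have h2' := (hNs x hxm).1
            have h3' := (s11_ptMono hf1 hSf α hαm).monotone
              (show s11N f α y + 1 ≤ s11N f α x by omega)
            linarith
          rcases eq_or_lt_of_le hnle with heq | hlt
          · rw [hHmid x hxm, hHmid y hym, ← heq]
            apply (g ^ s11N f α x).strictMono
            have hs := htmem x hxm
            have ht := htmem y hym
            rw [← heq] at ht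
            refine s11h0_mono h₀ ⟨hs.1, hs.2.le⟩ ⟨ht.1, ht.2.le⟩ ?_
            exact (f ^ (-(s11N f α x))).strictMono hxy
          · calc H x < (g ^ (s11N f α x + 1)) β := (hHbound x hxm).2
              _ ≤ (g ^ (s11N f α y)) β :=
                (s11_ptMono hg1 hSg β hβm).monotone (by omega)
              _ ≤ H y := (hHbound y hym).1
  have hsurj : Function.Surjective H := by
    intro y
    by_cases hyc : y ≤ c
    · exact ⟨y - c + a, by rw [hHlow _ (by linarith)]; ring⟩
    · by_cases hyd : d ≤ y
      · exact ⟨y - d + b, by rw [hHhigh _ (by linarith)]; ring⟩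
      · have hym : y ∈ Set.Ioo c d := ⟨not_le.1 hyc, not_le.1 hyd⟩
        obtain ⟨M, hM1, hM2⟩ := s11_block hg1 hSg β hβm y hym
        set t' := (g ^ (-M)) y with ht'def
        have ht'mem : t' ∈ Set.Ico β (g β) := by
          constructor
          · have := (g ^ (-M)).monotone hM1
            rwa [s11_cancel] at this
          · have h5 : (g ^ (-M)) ((g ^ (M + 1)) β) = g β := by
              rw [s11_zc, show -M + (M + 1) = 1 by ring, zpow_one]
            have := (g ^ (-M)).strictMono hM2
            rwa [h5] at this
        set s := s11h0 h₀.symm t' with hsdef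
        have hsmem : s ∈ Set.Icc α (f α) := s11h0_mem h₀.symm t' ⟨ht'mem.1, ht'mem.2.le⟩
        have hslt : s < f α := by
          rcases hsmem.2.lt_or_eq with h | h
          · exact h
          · exfalso
            have h6 : s11h0 h₀ s = t' := s11h0_right_inv h₀ t' ⟨ht'mem.1, ht'mem.2.le⟩
            rw [h, s11h0_top h₀ hαfα.le hβgβ.le] at h6
            exact ht'mem.2.ne' h6
        have hsm : s ∈ Set.Ioo a b := ⟨hαm.1.trans_le hsmem.1, hslt.trans hfαm.2⟩
        set x := (f ^ M) s with hxdef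
        have hxm : x ∈ Set.Ioo a b := s11_zpow_maps hf1 hSf M s hsm
        have hNx : s11N f α x = M := by
          apply hNeq x hxm
          · exact (f ^ M).monotone hsmem.1
          · have h5 : (f ^ M) (f α) = (f ^ (M + 1)) α := by
              have h6 := s11_zc f M 1 α
              rwa [zpow_one] at h6
            have := (f ^ M).strictMono hslt
            rwa [h5] at this
        refine ⟨x, ?_⟩
        rw [hHmid x hxm, hNx]
        have h7 : (f ^ (-M)) x = s := by rw [hxdef, s11_cancel]
        rw [h7, hsdef, s11h0_right_inv h₀ t' ⟨ht'mem.1, ht'mem.2.le⟩, ht'def, s11_cancel']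
  have heqn : ∀ x, H (f x) = g (H x) := by
    intro x
    by_cases hx : x ∈ Set.Ioo a b
    · have hfx : f x ∈ Set.Ioo a b := s11_maps hf1 hSf x hx
      have hN : s11N f α (f x) = s11N f α x + 1 := by
        apply hNeq (f x) hfx
        · have := f.monotone (hNs x hx).1
          rwa [show f ((f ^ s11N f α x) α) = (f ^ (s11N f α x + 1)) α from
            (s11_succ_apply f _ α).symm] at this
        · have := f.strictMono (hNs x hx).2
          rwa [show f ((f ^ (s11N f α x + 1)) α) = (f ^ (s11N f α x + 1 + 1)) α from
            (s11_succ_apply f _ α).symm] at this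
      rw [hHmid (f x) hfx, hHmid x hx, hN]
      have h7 : (f ^ (-(s11N f α x + 1))) (f x) = (f ^ (-(s11N f α x))) x := by
        have h8 := s11_zc f (-(s11N f α x + 1)) 1 x
        rw [zpow_one] at h8
        rw [h8, show -(s11N f α x + 1) + 1 = -(s11N f α x) by ring]
      rw [h7]
      exact s11_succ_apply g _ _
    · have hfix : f x = x := s11_fix hSf x hx
      rw [hfix]
      have hcase : x ≤ a ∨ b ≤ x := by
        by_contra hcon
        push_neg at hcon
        exact hx ⟨hcon.1, hcon.2⟩
      have hnotin : H x ∉ Set.Ioo c d := by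
        rcases hcase with h | h
        · rw [hHlow x h]; intro hmem; have := hmem.1; linarith
        · rw [hHhigh x h]; intro hmem; have := hmem.2; linarith
      exact (s11_fix hSg (H x) hnotin).symm
  refine ⟨StrictMono.orderIsoOfSurjective H hmono hsurj, ?_, ?_⟩
  · intro x hx
    have hco := congrFun (StrictMono.coe_orderIsoOfSurjective H hmono hsurj) x
    rw [hco]
    rcases hx.2.lt_or_eq with hlt | heq
    · have hxm : x ∈ Set.Ioo a b := ⟨hαm.1.trans_le hx.1, hlt.trans hfαm.2⟩
      have hN0 : s11N f α x = 0 := by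
        apply hNeq x hxm
        · simpa using hx.1
        · simpa using hlt
      rw [hHmid x hxm, hN0]
      simp only [neg_zero, zpow_zero]
      show s11h0 h₀ x = _
      rw [s11h0_apply h₀ x hx]
    · have hN1 : s11N f α x = 1 := by
        apply hNeq x (heq ▸ hfαm)
        · rw [zpow_one, heq]
        · rw [heq, s11_succ_apply, zpow_one]
          exact f.strictMono (s11_lt hf1 hSf α hαm)
      rw [hHmid x (heq ▸ hfαm), hN1]
      have h7 : (f ^ (-1 : ℤ)) x = α := by
        rw [heq]
        have := s11_cancel f 1 α
        rwa [zpow_one] at this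
      rw [h7, s11h0_bot h₀ hαfα.le hβgβ.le, zpow_one]
      have h8 : ((h₀ ⟨x, hx⟩ : Set.Icc β (g β)) : ℝ) = g β := by
        rw [← s11h0_apply h₀ x hx, heq]
        exact s11h0_top h₀ hαfα.le hβgβ.le
      rw [h8]
  · intro x
    have hco := StrictMono.coe_orderIsoOfSurjective H hmono hsurj
    rw [show ⇑(StrictMono.orderIsoOfSurjective H hmono hsurj) = H from hco]
    exact heqn x
end
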